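/- Let (g,[.,.]) be a Leibniz algebra over a field K, T : g → g a Rota-Baxter operator, and (V, l, r, T_V) a representation of the Rota-Baxter Leibniz algebra (g,[.,.],T). On the dual space V* define l*(x,f)(u) = −f(l(x,u)) and r*(f,x)(u) = f(l(x,u) + r(u,x)) for x ∈ g, f ∈ V*, u ∈ V, and let −T_V* : V* → V* be the map f ↦ −f∘T_V. Then (V*, l*, r*, −T_V*) is a representation of the Rota-Baxter Leibniz algebra (g,[.,.],T); that is: (i) l*(x,l*(y,f)) = l*([x,y],f) + l*(y,l*(x,f)); (ii) l*(x,r*(f,y)) = r*(l*(x,f),y) + r*(f,[x,y]); (iii) r*(f,[x,y]) = r*(r*(f,x),y) + l*(x,r*(f,y)); (iv) l*(Tx,−T_V*(f)) = −T_V*(l*(Tx,f) + l*(x,−T_V*(f))); (v) r*(−T_V*(f),Tx) = −T_V*(r*(f,Tx) + r*(−T_V*(f),x)), for all x,y ∈ g and f ∈ V*. -/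

import Mathlib

/-- A bilinear map between modules over a field `K`, expressed as a predicate
on a curried two-argument function. -/
def Bilin (K : Type*) [Field K] {A B C : Type*} [AddCommGroup A] [Module K A]
    [AddCommGroup B] [Module K B] [AddCommGroup C] [Module K C]
    (f : A → B → C) : Prop :=
  (∀ a a' b, f (a + a') b = f a b + f a' b) ∧
  (∀ (c : K) (a : A) (b : B), f (c • a) b = c • f a b) ∧
  (∀ a b b', f a (b + b') = f a b + f a b') ∧
  (∀ (c : K) (a : A) (b : B), f a (c • b) = c • f a b)

/-- The (left) Leibniz identity for a bracket. -/
def IsLeibnizBracket {g : Type*} [AddCommGroup g] (br : g → g → g) : Prop :=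
  ∀ x y z, br x (br y z) = br (br x y) z + br y (br x z)


/-- A representation of a Leibniz algebra `(g, br)` on `V`, given by left and
right actions `l : g → V → V` and `r : V → g → V`. -/
def IsLeibnizRep {g V : Type*} [AddCommGroup g] [AddCommGroup V]
    (br : g → g → g) (l : g → V → V) (r : V → g → V) : Prop :=
  (∀ x y u, l x (l y u) = l (br x y) u + l y (l x u)) ∧
  (∀ x y u, l x (r u y) = r (l x u) y + r u (br x y)) ∧
  (∀ x y u, r u (br x y) = r (r u x) y + l x (r u y))

/-- A representation of a Rota-Baxter Leibniz algebra `(g, br, T)` on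
`(V, l, r, TV)`. -/
def IsRBRep {g V : Type*} [AddCommGroup g] [AddCommGroup V]
    (br : g → g → g) (T : g → g) (l : g → V → V) (r : V → g → V)
    (TV : V → V) : Prop :=
  IsLeibnizRep br l r ∧
  (∀ x u, l (T x) (TV u) = TV (l (T x) u + l x (TV u))) ∧
  (∀ x u, r (TV u) (T x) = TV (r (TV u) x + r u (T x)))

/-- Given a representation `(V, l, r, TV)` of a Rota-Baxter Leibniz algebra
`(g, br, T)`, the dual space `V*` with `l*(x,f)(u) = -f(l(x,u))`,
`r*(f,x)(u) = f(l(x,u) + r(u,x))` and the operator `-TV* : f ↦ -f ∘ TV` is a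
representation of `(g, br, T)` (the dual representation). -/
theorem dual_representation {K : Type*} [Field K]
    {g : Type*} [AddCommGroup g] [Module K g]
    {V : Type*} [AddCommGroup V] [Module K V]
    (br : g → g → g) (hbil : Bilin K br) (hleib : IsLeibnizBracket br)
    (T : g → g) (hT : IsLinearMap K T)
    (hRB : ∀ x y, br (T x) (T y) = T (br (T x) y + br x (T y)))
    (l : g → V → V) (r : V → g → V) (TV : V → V)
    (hl : Bilin K l) (hr : Bilin K r) (hTV : IsLinearMap K TV)
    (hrep : IsRBRep br T l r TV)
    (lstar : g → Module.Dual K V → Module.Dual K V)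
    (rstar : Module.Dual K V → g → Module.Dual K V)
    (Tstar : Module.Dual K V → Module.Dual K V)
    (hlstar : ∀ (x : g) (f : Module.Dual K V) (u : V), lstar x f u = - f (l x u))
    (hrstar : ∀ (f : Module.Dual K V) (x : g) (u : V),
      rstar f x u = f (l x u + r u x))
    (hTstar : ∀ (f : Module.Dual K V) (u : V), Tstar f u = - f (TV u)) :
    IsRBRep br T lstar rstar Tstar := by

  obtain ⟨⟨hr1, hr2, hr3⟩, hRBl, hRBr⟩ := hrep
  have hrzero : ∀ (x y : g) (u : V), r (l x u + r u x) y = 0 := by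
    intro x y u
    have h := hr2 x y u
    rw [hr3 x y u, ← add_assoc] at h
    rw [hr.1]
    exact right_eq_add.mp h
  refine ⟨⟨?_, ?_, ?_⟩, ?_, ?_⟩
  · intro x y f
    ext u
    simp only [hlstar, LinearMap.add_apply, map_neg, neg_neg]
    rw [hr1 x y u, map_add]
    abel
  · intro x y f
    ext u
    simp only [hlstar, hrstar, LinearMap.add_apply, map_neg, neg_neg]
    rw [hl.2.2.1, hr1 x y u, hr2 x y u]
    simp only [map_add]
    abel
  · intro x y f
    ext u
    simp only [hlstar, hrstar, LinearMap.add_apply, map_neg, neg_neg]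
    rw [hl.2.2.1, hr1 x y u, hr2 x y u, hrzero y x u]
    simp only [map_add, map_zero]
    abel
  · intro x f
    ext u
    simp only [hlstar, hTstar, LinearMap.add_apply, map_neg, neg_neg, neg_add_rev]
    rw [hRBl x u, hTV.1]
    simp only [map_add]
    abel
  · intro x f
    ext u
    simp only [hlstar, hrstar, hTstar, LinearMap.add_apply, map_neg, neg_neg, neg_add_rev]
    simp only [hRBl x u, hRBr x u, hTV.1, map_add]
    abel
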